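/- Let 𝒳 be a finite vocabulary with |𝒳| = d ≥ 2 and let μ be a probability distribution on 𝒳^{M+1} written as (z, Z) with Z = (z_{−M},…,z_{−1}). Fix a parent set pa ⊆ {1,…,M} with |pa| = n, and assume: (i) the n-gram property: whenever μ(Z = ζ) > 0, the conditional distribution of z given Z = ζ depends only on ζ_{−pa} = (ζ_{−s})_{s∈pa}, i.e. μ(z = e | Z = ζ) = μ(z = e | Z_{−pa} = ζ_{−pa}) for all e ∈ 𝒳; and (ii) uniform marginals: μ(z = e) = 1/d for all e ∈ 𝒳, and for every S ⊆ {1,…,M} and every E ∈ 𝒳^S, μ(Z_{−S} = E) = d^{−|S|}. Then for every S ⊆ {1,…,M} with |S| > n, Ĩ_{χ²}(S) ≤ Ĩ_{χ²}(pa); if moreover Ĩ_{χ²}(pa) > 0, this inequality is strict, and consequently, for every D ≥ 1, every maximizer of Ĩ_{χ²} over { S ⊆ {1,…,M} : |S| ≤ D } has cardinality at most n. -/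
import Mathlib


open Finset

/-- The tuple `(x_{l0-s})_{s ∈ S}` of tokens at offsets `S` before position `l0` (0-based). -/
def parents (d T : ℕ) (S : Finset ℕ) (x : Fin T → Fin d) (l0 : ℕ) (hl : l0 < T) :
    {s // s ∈ S} → Fin d :=
  fun s => x ⟨l0 - s.1, lt_of_le_of_lt (Nat.sub_le _ _) hl⟩

/-- The window `Y_{l0} = (x_{l0}, (x_{l0-s})_{s ∈ S})` (0-based position `l0`). -/
def window (d T : ℕ) (S : Finset ℕ) (x : Fin T → Fin d) (l0 : ℕ) (hl : l0 < T) :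
    Fin d × ({s // s ∈ S} → Fin d) :=
  (x ⟨l0, hl⟩, parents d T S x l0 hl)

/-- The law of the window `Y_{l0}` when the full sequence is distributed as `q`. -/
noncomputable def windowLaw (d T : ℕ) (S : Finset ℕ) (q : (Fin T → Fin d) → ℝ)
    (l0 : ℕ) (hl : l0 < T) (w : Fin d × ({s // s ∈ S} → Fin d)) : ℝ :=
  ∑ x : Fin T → Fin d, if window d T S x l0 hl = w then q x else 0

/-- The single-token marginal at the last coordinate of a distribution on `𝒳^{M+1}`. -/
noncomputable def tokenMarg (d M : ℕ) (μb : (Fin (M + 1) → Fin d) → ℝ) (e : Fin d) : ℝ :=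
  ∑ y : Fin (M + 1) → Fin d, if y ⟨M, Nat.lt_succ_self M⟩ = e then μb y else 0

/-- The modified χ²-mutual information
`Ĩ_{χ²}(S) = Σ_E [ Σ_e μ(z = e, Z_{-S} = E)² / μ(z = e) - μ(Z_{-S} = E)² ]`. -/
noncomputable def modMI (d M : ℕ) (μb : (Fin (M + 1) → Fin d) → ℝ) (S : Finset ℕ) : ℝ :=
  ∑ E : {s // s ∈ S} → Fin d,
    ((∑ e : Fin d,
        windowLaw d (M + 1) S μb M (Nat.lt_succ_self M) (e, E) ^ 2 / tokenMarg d M μb e) -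
      (∑ e : Fin d, windowLaw d (M + 1) S μb M (Nat.lt_succ_self M) (e, E)) ^ 2)

section Aux

/-- Restriction of a length-`M` prefix to the offsets in `S`. -/
def proj (d M : ℕ) (S : Finset ℕ) (hS : S ⊆ Finset.Icc 1 M) (ζ : Fin M → Fin d) :
    {s // s ∈ S} → Fin d :=
  fun s => ζ ⟨M - s.1, by have := Finset.mem_Icc.mp (hS s.2); omega⟩

lemma snoc_mk_lt {d M : ℕ} (ζ : Fin M → Fin d) (e : Fin d) {k : ℕ} (hk : k < M)
    (hk' : k < M + 1) : (Fin.snoc ζ e : Fin (M + 1) → Fin d) ⟨k, hk'⟩ = ζ ⟨k, hk⟩ := by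
  have h : (⟨k, hk'⟩ : Fin (M + 1)) = Fin.castSucc ⟨k, hk⟩ := rfl
  rw [h, Fin.snoc_castSucc]

lemma windowLaw_snoc (d M : ℕ) (S : Finset ℕ) (hS : S ⊆ Finset.Icc 1 M)
    (μb : (Fin (M + 1) → Fin d) → ℝ) (e : Fin d) (E : {s // s ∈ S} → Fin d) :
    windowLaw d (M + 1) S μb M (Nat.lt_succ_self M) (e, E) =
      ∑ ζ : Fin M → Fin d, if proj d M S hS ζ = E then μb (Fin.snoc ζ e) else 0 := by
  have key : ∀ (e' : Fin d) (ζ : Fin M → Fin d),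
      window d (M + 1) S (Fin.snoc ζ e') M (Nat.lt_succ_self M) = (e', proj d M S hS ζ) := by
    intro e' ζ
    unfold window parents proj
    simp only [Prod.mk.injEq]
    refine ⟨?_, funext fun s => ?_⟩
    · exact Fin.snoc_last (α := fun _ : Fin (M + 1) => Fin d) (p := ζ) (x := e')
    · exact snoc_mk_lt ζ e' (by have := Finset.mem_Icc.mp (hS s.2); omega) _
  rw [windowLaw,
    ← Equiv.sum_comp (Fin.snocEquiv fun _ => Fin d)
      (fun x => if window d (M + 1) S x M (Nat.lt_succ_self M) = (e, E) then μb x else 0),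
    Fintype.sum_prod_type, Finset.sum_comm]
  refine Finset.sum_congr rfl fun ζ _ => ?_
  have h2 : ∀ a : Fin d,
      (if window d (M + 1) S ((Fin.snocEquiv fun _ => Fin d) (a, ζ)) M (Nat.lt_succ_self M)
          = (e, E) then μb ((Fin.snocEquiv fun _ => Fin d) (a, ζ)) else 0)
        = (if a = e ∧ proj d M S hS ζ = E then μb (Fin.snoc ζ a) else 0) := by
    intro a
    have h1 : ((Fin.snocEquiv fun _ => Fin d) (a, ζ)) = Fin.snoc ζ a := rfl
    simp only [h1, key a ζ, Prod.mk.injEq]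
  simp only [h2]
  by_cases hP : proj d M S hS ζ = E
  · simp [hP]
  · simp [hP]

lemma marg_eq (d M : ℕ) (S : Finset ℕ) (hS : S ⊆ Finset.Icc 1 M)
    (μb : (Fin (M + 1) → Fin d) → ℝ) (E : {s // s ∈ S} → Fin d) :
    (∑ ζ : Fin M → Fin d,
        if proj d M S hS ζ = E then (∑ e' : Fin d, μb (Fin.snoc ζ e')) else 0)
      = ∑ e' : Fin d, windowLaw d (M + 1) S μb M (Nat.lt_succ_self M) (e', E) := by
  have h : ∀ ζ : Fin M → Fin d,
      (if proj d M S hS ζ = E then (∑ e' : Fin d, μb (Fin.snoc ζ e')) else 0)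
        = ∑ e' : Fin d, if proj d M S hS ζ = E then μb (Fin.snoc ζ e') else 0 := by
    intro ζ; split <;> simp
  simp_rw [h, windowLaw_snoc d M S hS μb]
  exact Finset.sum_comm

lemma card_fun_d (d : ℕ) (S : Finset ℕ) :
    (Fintype.card ({s // s ∈ S} → Fin d)) = d ^ S.card := by
  rw [Fintype.card_fun, Fintype.card_fin, Fintype.card_coe]

lemma modMI_eq (d M : ℕ) (hd : 2 ≤ d) (μb : (Fin (M + 1) → Fin d) → ℝ)
    (huniftok : ∀ e : Fin d, tokenMarg d M μb e = 1 / d)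
    (hunifset : ∀ S : Finset ℕ, S ⊆ Finset.Icc 1 M →
      ∀ E : {s // s ∈ S} → Fin d,
        (∑ e : Fin d, windowLaw d (M + 1) S μb M (Nat.lt_succ_self M) (e, E)) =
          (1 / (d : ℝ)) ^ S.card)
    (S : Finset ℕ) (hS : S ⊆ Finset.Icc 1 M) :
    modMI d M μb S =
      (d : ℝ) * (∑ E : {s // s ∈ S} → Fin d, ∑ e : Fin d,
          windowLaw d (M + 1) S μb M (Nat.lt_succ_self M) (e, E) ^ 2)
        - (1 / (d : ℝ)) ^ S.card := by
  have hd0 : (0 : ℝ) < d := by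
    have : (0 : ℕ) < d := by omega
    exact_mod_cast this
  have hone : ((d : ℝ)) ^ S.card * (1 / (d : ℝ)) ^ S.card = 1 := by
    rw [← mul_pow]; rw [mul_one_div, div_self hd0.ne', one_pow]
  rw [modMI, Finset.sum_sub_distrib]
  congr 1
  · rw [Finset.mul_sum]
    refine Finset.sum_congr rfl fun E _ => ?_
    simp_rw [huniftok, div_div_eq_mul_div, div_one]
    rw [← Finset.sum_mul, mul_comm]
  · calc (∑ E : {s // s ∈ S} → Fin d,
          (∑ e : Fin d, windowLaw d (M + 1) S μb M (Nat.lt_succ_self M) (e, E)) ^ 2)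
        = ∑ _E : {s // s ∈ S} → Fin d, ((1 / (d : ℝ)) ^ S.card) ^ 2 :=
          Finset.sum_congr rfl fun E _ => by rw [hunifset S hS E]
      _ = (Fintype.card ({s // s ∈ S} → Fin d)) * ((1 / (d : ℝ)) ^ S.card) ^ 2 := by
          rw [Finset.sum_const, Finset.card_univ, nsmul_eq_mul]
      _ = (1 / (d : ℝ)) ^ S.card := by
          rw [card_fun_d, sq, Nat.cast_pow, ← mul_assoc, hone, one_mul]

end Aux

section Aux2

lemma Apa_lower (d M n : ℕ) (hd : 2 ≤ d) (μb : (Fin (M + 1) → Fin d) → ℝ)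
    (pa : Finset ℕ) (hpa' : pa ⊆ Finset.Icc 1 M) (hpacard : pa.card = n)
    (hunifset : ∀ S : Finset ℕ, S ⊆ Finset.Icc 1 M →
      ∀ E : {s // s ∈ S} → Fin d,
        (∑ e : Fin d, windowLaw d (M + 1) S μb M (Nat.lt_succ_self M) (e, E)) =
          (1 / (d : ℝ)) ^ S.card) :
    (1 / (d : ℝ)) ^ n ≤
      (d : ℝ) * ∑ A : {s // s ∈ pa} → Fin d, ∑ e : Fin d,
        windowLaw d (M + 1) pa μb M (Nat.lt_succ_self M) (e, A) ^ 2 := by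
  have hd0 : (0 : ℝ) < d := by
    have : (0 : ℕ) < d := by omega
    exact_mod_cast this
  have hone : ((d : ℝ)) ^ n * (1 / (d : ℝ)) ^ n = 1 := by
    rw [← mul_pow, mul_one_div, div_self hd0.ne', one_pow]
  calc (1 / (d : ℝ)) ^ n
      = ∑ _A : {s // s ∈ pa} → Fin d, ((1 / (d : ℝ)) ^ n) ^ 2 := by
        rw [Finset.sum_const, Finset.card_univ, nsmul_eq_mul, card_fun_d, hpacard,
          sq, Nat.cast_pow, ← mul_assoc, hone, one_mul]
    _ ≤ ∑ A : {s // s ∈ pa} → Fin d, (d : ℝ) * ∑ e : Fin d,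
          windowLaw d (M + 1) pa μb M (Nat.lt_succ_self M) (e, A) ^ 2 := by
        refine Finset.sum_le_sum fun A _ => ?_
        have h1 := sq_sum_le_card_mul_sum_sq (s := (Finset.univ : Finset (Fin d)))
          (f := fun e => windowLaw d (M + 1) pa μb M (Nat.lt_succ_self M) (e, A))
        rw [hunifset pa hpa' A, hpacard] at h1
        simpa using h1
    _ = (d : ℝ) * ∑ A : {s // s ∈ pa} → Fin d, ∑ e : Fin d,
          windowLaw d (M + 1) pa μb M (Nat.lt_succ_self M) (e, A) ^ 2 := by
        rw [Finset.mul_sum]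

lemma A_le (d M n : ℕ) (hd : 2 ≤ d) (μb : (Fin (M + 1) → Fin d) → ℝ)
    (hnn : ∀ y, 0 ≤ μb y)
    (pa : Finset ℕ) (hpa' : pa ⊆ Finset.Icc 1 M) (hpacard : pa.card = n)
    (hfac : ∀ (ζ : Fin M → Fin d) (e : Fin d),
      μb (Fin.snoc ζ e) = (∑ e' : Fin d, μb (Fin.snoc ζ e')) *
        ((d : ℝ) ^ n *
          windowLaw d (M + 1) pa μb M (Nat.lt_succ_self M) (e, proj d M pa hpa' ζ)))
    (hunifset : ∀ S : Finset ℕ, S ⊆ Finset.Icc 1 M →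
      ∀ E : {s // s ∈ S} → Fin d,
        (∑ e : Fin d, windowLaw d (M + 1) S μb M (Nat.lt_succ_self M) (e, E)) =
          (1 / (d : ℝ)) ^ S.card)
    (S : Finset ℕ) (hS : S ⊆ Finset.Icc 1 M) :
    (∑ E : {s // s ∈ S} → Fin d, ∑ e : Fin d,
        windowLaw d (M + 1) S μb M (Nat.lt_succ_self M) (e, E) ^ 2) ≤
      (1 / (d : ℝ)) ^ S.card * ((d : ℝ) ^ n *
        ∑ A : {s // s ∈ pa} → Fin d, ∑ e : Fin d,
          windowLaw d (M + 1) pa μb M (Nat.lt_succ_self M) (e, A) ^ 2) := by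
  have hd0 : (0 : ℝ) < d := by
    have : (0 : ℕ) < d := by omega
    exact_mod_cast this
  set q : (Fin M → Fin d) → ℝ := fun ζ => ∑ e' : Fin d, μb (Fin.snoc ζ e') with hqdef
  set W : Fin d → ({s // s ∈ pa} → Fin d) → ℝ :=
    fun e A => windowLaw d (M + 1) pa μb M (Nat.lt_succ_self M) (e, A) with hWdef
  have hq0 : ∀ ζ, 0 ≤ q ζ := fun ζ => Finset.sum_nonneg fun _ _ => hnn _
  have hmargS : ∀ E : {s // s ∈ S} → Fin d,
      (∑ ζ : Fin M → Fin d, if proj d M S hS ζ = E then q ζ else 0)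
        = (1 / (d : ℝ)) ^ S.card := by
    intro E; rw [hqdef]; rw [marg_eq d M S hS μb E, hunifset S hS E]
  have hmargpa : ∀ A : {s // s ∈ pa} → Fin d,
      (∑ ζ : Fin M → Fin d, if proj d M pa hpa' ζ = A then q ζ else 0)
        = (1 / (d : ℝ)) ^ n := by
    intro A; rw [hqdef]; rw [marg_eq d M pa hpa' μb A, hunifset pa hpa' A, hpacard]
  have hone : (1 / (d : ℝ)) ^ n * ((d : ℝ)) ^ n = 1 := by
    rw [← mul_pow, one_div_mul_cancel hd0.ne', one_pow]
  calc (∑ E : {s // s ∈ S} → Fin d, ∑ e : Fin d,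
        windowLaw d (M + 1) S μb M (Nat.lt_succ_self M) (e, E) ^ 2)
      ≤ ∑ E : {s // s ∈ S} → Fin d, ∑ e : Fin d, (1 / (d : ℝ)) ^ S.card *
          (∑ ζ : Fin M → Fin d, if proj d M S hS ζ = E then
            q ζ * ((d : ℝ) ^ n * W e (proj d M pa hpa' ζ)) ^ 2 else 0) := by
        refine Finset.sum_le_sum fun E _ => Finset.sum_le_sum fun e _ => ?_
        rw [windowLaw_snoc d M S hS μb e E]
        have hrw : (∑ ζ : Fin M → Fin d, if proj d M S hS ζ = E then μb (Fin.snoc ζ e) else 0)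
            = ∑ ζ : Fin M → Fin d, if proj d M S hS ζ = E then
                q ζ * ((d : ℝ) ^ n * W e (proj d M pa hpa' ζ)) else 0 := by
          refine Finset.sum_congr rfl fun ζ _ => ?_
          split
          · exact hfac ζ e
          · rfl
        rw [hrw, ← hmargS E]
        refine sum_sq_le_sum_mul_sum_of_sq_eq_mul Finset.univ ?_ ?_ ?_
        · intro ζ _; split
          · exact hq0 ζ
          · exact le_rfl
        · intro ζ _; split
          · exact mul_nonneg (hq0 ζ) (sq_nonneg _)
          · exact le_rfl
        · intro ζ _; split <;> ring
    _ = (1 / (d : ℝ)) ^ S.card * ∑ e : Fin d, ∑ ζ : Fin M → Fin d,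
          q ζ * ((d : ℝ) ^ n * W e (proj d M pa hpa' ζ)) ^ 2 := by
        rw [Finset.sum_comm, Finset.mul_sum]
        refine Finset.sum_congr rfl fun e _ => ?_
        rw [← Finset.mul_sum]
        congr 1
        rw [Finset.sum_comm]
        refine Finset.sum_congr rfl fun ζ _ => ?_
        rw [Finset.sum_ite_eq]
        simp
    _ = (1 / (d : ℝ)) ^ S.card * ((d : ℝ) ^ n *
          ∑ A : {s // s ∈ pa} → Fin d, ∑ e : Fin d,
            windowLaw d (M + 1) pa μb M (Nat.lt_succ_self M) (e, A) ^ 2) := by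
        congr 1
        calc (∑ e : Fin d, ∑ ζ : Fin M → Fin d,
              q ζ * ((d : ℝ) ^ n * W e (proj d M pa hpa' ζ)) ^ 2)
            = ∑ e : Fin d, ∑ A : {s // s ∈ pa} → Fin d,
                (1 / (d : ℝ)) ^ n * ((d : ℝ) ^ n * W e A) ^ 2 := by
              refine Finset.sum_congr rfl fun e _ => ?_
              calc (∑ ζ : Fin M → Fin d, q ζ * ((d : ℝ) ^ n * W e (proj d M pa hpa' ζ)) ^ 2)
                  = ∑ ζ : Fin M → Fin d, ∑ A : {s // s ∈ pa} → Fin d,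
                      if proj d M pa hpa' ζ = A then q ζ * ((d : ℝ) ^ n * W e A) ^ 2 else 0 := by
                    refine Finset.sum_congr rfl fun ζ _ => ?_
                    rw [Finset.sum_ite_eq]
                    simp
                _ = ∑ A : {s // s ∈ pa} → Fin d,
                      (∑ ζ : Fin M → Fin d, if proj d M pa hpa' ζ = A then q ζ else 0) *
                        ((d : ℝ) ^ n * W e A) ^ 2 := by
                    rw [Finset.sum_comm]
                    refine Finset.sum_congr rfl fun A _ => ?_
                    rw [Finset.sum_mul]
                    refine Finset.sum_congr rfl fun ζ _ => ?_
                    split <;> ring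
                _ = ∑ A : {s // s ∈ pa} → Fin d,
                      (1 / (d : ℝ)) ^ n * ((d : ℝ) ^ n * W e A) ^ 2 := by
                    refine Finset.sum_congr rfl fun A _ => ?_
                    rw [hmargpa A]
          _ = (d : ℝ) ^ n * ∑ A : {s // s ∈ pa} → Fin d, ∑ e : Fin d,
                windowLaw d (M + 1) pa μb M (Nat.lt_succ_self M) (e, A) ^ 2 := by
              rw [Finset.sum_comm, Finset.mul_sum]
              refine Finset.sum_congr rfl fun A _ => ?_
              rw [Finset.mul_sum]
              refine Finset.sum_congr rfl fun e _ => ?_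
              rw [hWdef]
              have : (1 / (d : ℝ)) ^ n * ((d : ℝ) ^ n *
                  windowLaw d (M + 1) pa μb M (Nat.lt_succ_self M) (e, A)) ^ 2
                  = ((1 / (d : ℝ)) ^ n * (d : ℝ) ^ n) * ((d : ℝ) ^ n *
                    windowLaw d (M + 1) pa μb M (Nat.lt_succ_self M) (e, A) ^ 2) := by ring
              rw [this, hone, one_mul]

end Aux2

/-- Suppose `μ` satisfies the `n`-gram property with parent set `pa`
(`|pa| = n`) and has uniform marginals. Then any `S ⊆ {1,…,M}` with `|S| > n` satisfies
`Ĩ_{χ²}(S) ≤ Ĩ_{χ²}(pa)`; if moreover `Ĩ_{χ²}(pa) > 0` the inequality is strict, and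
consequently every maximizer of `Ĩ_{χ²}` over `{S : |S| ≤ D}` has cardinality at most `n`. -/
theorem statement19 (d M n : ℕ) (hd : 2 ≤ d) (hM : 0 < M) (hn : 0 < n)
    (μb : (Fin (M + 1) → Fin d) → ℝ) (hnn : ∀ y, 0 ≤ μb y) (hsum : ∑ y, μb y = 1)
    (pa : Finset ℕ) (hpa : ∀ s ∈ pa, 1 ≤ s ∧ s ≤ M) (hpacard : pa.card = n)
    (hngram : ∀ (ζ : Fin M → Fin d) (e : Fin d),
      0 < (∑ e' : Fin d, μb (Fin.snoc ζ e')) →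
        μb (Fin.snoc ζ e) / (∑ e' : Fin d, μb (Fin.snoc ζ e')) =
          windowLaw d (M + 1) pa μb M (Nat.lt_succ_self M)
              (e, fun s => ζ ⟨M - s.1, by have := hpa s.1 s.2; omega⟩) /
            ∑ e' : Fin d,
              windowLaw d (M + 1) pa μb M (Nat.lt_succ_self M)
                (e', fun s => ζ ⟨M - s.1, by have := hpa s.1 s.2; omega⟩))
    (huniftok : ∀ e : Fin d, tokenMarg d M μb e = 1 / d)
    (hunifset : ∀ S : Finset ℕ, S ⊆ Finset.Icc 1 M →
      ∀ E : {s // s ∈ S} → Fin d,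
        (∑ e : Fin d, windowLaw d (M + 1) S μb M (Nat.lt_succ_self M) (e, E)) =
          (1 / (d : ℝ)) ^ S.card) :
    (∀ S : Finset ℕ, S ⊆ Finset.Icc 1 M → n < S.card →
        modMI d M μb S ≤ modMI d M μb pa) ∧
    (0 < modMI d M μb pa →
      (∀ S : Finset ℕ, S ⊆ Finset.Icc 1 M → n < S.card →
          modMI d M μb S < modMI d M μb pa) ∧
      (∀ D : ℕ, 1 ≤ D → ∀ S : Finset ℕ, S ⊆ Finset.Icc 1 M → S.card ≤ D →
        (∀ S' : Finset ℕ, S' ⊆ Finset.Icc 1 M → S'.card ≤ D →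
            modMI d M μb S' ≤ modMI d M μb S) →
        S.card ≤ n)) := by
  have hpa' : pa ⊆ Finset.Icc 1 M := fun s hs => Finset.mem_Icc.mpr ⟨(hpa s hs).1, (hpa s hs).2⟩
  have hd0 : (0 : ℝ) < d := by
    have : (0 : ℕ) < d := by omega
    exact_mod_cast this
  have hone : (1 / (d : ℝ)) ^ n * ((d : ℝ)) ^ n = 1 := by
    rw [← mul_pow, one_div_mul_cancel hd0.ne', one_pow]
  -- pointwise factorization from the n-gram property
  have hfac : ∀ (ζ : Fin M → Fin d) (e : Fin d),
      μb (Fin.snoc ζ e) = (∑ e' : Fin d, μb (Fin.snoc ζ e')) *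
        ((d : ℝ) ^ n *
          windowLaw d (M + 1) pa μb M (Nat.lt_succ_self M) (e, proj d M pa hpa' ζ)) := by
    intro ζ e
    by_cases hq : 0 < ∑ e' : Fin d, μb (Fin.snoc ζ e')
    · have h : μb (Fin.snoc ζ e) / (∑ e' : Fin d, μb (Fin.snoc ζ e')) =
          windowLaw d (M + 1) pa μb M (Nat.lt_succ_self M) (e, proj d M pa hpa' ζ) /
            ∑ e' : Fin d,
              windowLaw d (M + 1) pa μb M (Nat.lt_succ_self M) (e', proj d M pa hpa' ζ) :=
        hngram ζ e hq
      rw [hunifset pa hpa' (proj d M pa hpa' ζ), hpacard] at h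
      have hu : (0 : ℝ) < (1 / (d : ℝ)) ^ n := by positivity
      rw [div_eq_div_iff hq.ne' hu.ne'] at h
      calc μb (Fin.snoc ζ e)
          = μb (Fin.snoc ζ e) * ((1 / (d : ℝ)) ^ n * ((d : ℝ)) ^ n) := by rw [hone, mul_one]
        _ = (μb (Fin.snoc ζ e) * (1 / (d : ℝ)) ^ n) * ((d : ℝ)) ^ n := by ring
        _ = (windowLaw d (M + 1) pa μb M (Nat.lt_succ_self M) (e, proj d M pa hpa' ζ) *
              (∑ e' : Fin d, μb (Fin.snoc ζ e'))) * ((d : ℝ)) ^ n := by rw [h]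
        _ = (∑ e' : Fin d, μb (Fin.snoc ζ e')) *
              ((d : ℝ) ^ n *
                windowLaw d (M + 1) pa μb M (Nat.lt_succ_self M) (e, proj d M pa hpa' ζ)) := by
            ring
    · have hz : (∑ e' : Fin d, μb (Fin.snoc ζ e')) = 0 := by
        have h0 : 0 ≤ ∑ e' : Fin d, μb (Fin.snoc ζ e') :=
          Finset.sum_nonneg fun _ _ => hnn _
        cases h0.lt_or_eq with
        | inl h => exact absurd h hq
        | inr h => exact h.symm
      have hz' : μb (Fin.snoc ζ e) = 0 := by
        have := (Finset.sum_eq_zero_iff_of_nonneg (fun e' _ => hnn (Fin.snoc ζ e'))).mp hz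
        exact this e (Finset.mem_univ e)
      rw [hz', hz, zero_mul]
  -- notation for the quadratic sums
  have hApaEq : modMI d M μb pa =
      (d : ℝ) * (∑ A : {s // s ∈ pa} → Fin d, ∑ e : Fin d,
          windowLaw d (M + 1) pa μb M (Nat.lt_succ_self M) (e, A) ^ 2)
        - (1 / (d : ℝ)) ^ n := by
    rw [modMI_eq d M hd μb huniftok hunifset pa hpa', hpacard]
  have hlow := Apa_lower d M n hd μb pa hpa' hpacard hunifset
  have hpanneg : 0 ≤ modMI d M μb pa := by rw [hApaEq]; linarith
  have key : ∀ S : Finset ℕ, S ⊆ Finset.Icc 1 M → n < S.card →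
      modMI d M μb S ≤ (1 / (d : ℝ)) ^ (S.card - n) * modMI d M μb pa := by
    intro S hS hcard
    have h1 := modMI_eq d M hd μb huniftok hunifset S hS
    have h2 := A_le d M n hd μb hnn pa hpa' hpacard hfac hunifset S hS
    have hsplit : (1 / (d : ℝ)) ^ S.card = (1 / (d : ℝ)) ^ (S.card - n) * (1 / (d : ℝ)) ^ n := by
      rw [← pow_add]
      congr 1
      omega
    rw [h1, hApaEq]
    calc (d : ℝ) * (∑ E : {s // s ∈ S} → Fin d, ∑ e : Fin d,
            windowLaw d (M + 1) S μb M (Nat.lt_succ_self M) (e, E) ^ 2)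
          - (1 / (d : ℝ)) ^ S.card
        ≤ (d : ℝ) * ((1 / (d : ℝ)) ^ S.card * ((d : ℝ) ^ n *
            ∑ A : {s // s ∈ pa} → Fin d, ∑ e : Fin d,
              windowLaw d (M + 1) pa μb M (Nat.lt_succ_self M) (e, A) ^ 2))
          - (1 / (d : ℝ)) ^ S.card :=
          sub_le_sub_right (mul_le_mul_of_nonneg_left h2 hd0.le) _
      _ = (1 / (d : ℝ)) ^ (S.card - n) *
            ((d : ℝ) * (∑ A : {s // s ∈ pa} → Fin d, ∑ e : Fin d,
                windowLaw d (M + 1) pa μb M (Nat.lt_succ_self M) (e, A) ^ 2)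
              - (1 / (d : ℝ)) ^ n) := by
          rw [hsplit]
          have h3 : (1 / (d : ℝ)) ^ n * ((d : ℝ)) ^ n = 1 := hone
          linear_combination ((1 / (d : ℝ)) ^ (S.card - n) *
            ((d : ℝ) * (∑ A : {s // s ∈ pa} → Fin d, ∑ e : Fin d,
                windowLaw d (M + 1) pa μb M (Nat.lt_succ_self M) (e, A) ^ 2))) * h3
  have hu0 : (0 : ℝ) ≤ 1 / (d : ℝ) := by positivity
  have hu1 : 1 / (d : ℝ) ≤ 1 := by
    rw [div_le_one hd0]
    exact_mod_cast (by omega : 1 ≤ d)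
  have hulp : 1 / (d : ℝ) < 1 := by
    rw [div_lt_one hd0]
    exact_mod_cast (by omega : 1 < d)
  constructor
  · intro S hS hc
    calc modMI d M μb S ≤ (1 / (d : ℝ)) ^ (S.card - n) * modMI d M μb pa := key S hS hc
      _ ≤ 1 * modMI d M μb pa :=
          mul_le_mul_of_nonneg_right (pow_le_one₀ hu0 hu1) hpanneg
      _ = modMI d M μb pa := one_mul _
  · intro hpos
    have hstrict : ∀ S : Finset ℕ, S ⊆ Finset.Icc 1 M → n < S.card →
        modMI d M μb S < modMI d M μb pa := by
      intro S hS hc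
      have hk : 1 ≤ S.card - n := by omega
      have hlt : (1 / (d : ℝ)) ^ (S.card - n) < 1 := by
        calc (1 / (d : ℝ)) ^ (S.card - n) ≤ (1 / (d : ℝ)) ^ 1 :=
            pow_le_pow_of_le_one hu0 hu1 hk
          _ = 1 / (d : ℝ) := pow_one _
          _ < 1 := hulp
      calc modMI d M μb S ≤ (1 / (d : ℝ)) ^ (S.card - n) * modMI d M μb pa := key S hS hc
        _ < 1 * modMI d M μb pa := mul_lt_mul_of_pos_right hlt hpos
        _ = modMI d M μb pa := one_mul _
    refine ⟨hstrict, ?_⟩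
    intro D hD S hSsub hSD hmax
    by_contra hc
    push_neg at hc
    have h1 := hstrict S hSsub hc
    have h2 := hmax pa hpa' (by omega)
    linarith
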